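/- Let (X,d) be a Polish metric space, c a power type cost function with exponent p₀ and associated distance d̃ = c^{1/p₀}, and μ a Borel probability measure on X. Suppose μ satisfies the concentration inequality for some a' > 0 and r₀ ≥ 0: for every Borel A ⊆ X with μ(A) ≥ 1/2 and every r ≥ r₀, μ(A_r) ≥ 1 − e^{−(r−r₀)^{p₀}/a'}, where A_r = {x : ∃ y ∈ A, d̃(x,y) ≤ r}. Then for every x₀ ∈ X, ∫ e^{δ c(x₀,y)} μ(dy) < ∞ for all δ < 1/a', and ∬ e^{δ c(x,y)} μ(dx) μ(dy) < ∞ for all δ < 1/(a' 2^{p₀−1}). -/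

import Mathlib

open MeasureTheory Filter Set
open scoped ENNReal Topology

noncomputable section

/-- The set of couplings of two measures. -/
def couplings {X : Type*} [MeasurableSpace X] (ν μ : Measure X) : Set (Measure (X × X)) :=
  {π | π.map Prod.fst = ν ∧ π.map Prod.snd = μ}

/-- Optimal transport cost for cost function `c`. -/
noncomputable def transportCost {X : Type*} [MeasurableSpace X] (c : X → X → ℝ)
    (ν μ : Measure X) : ℝ≥0∞ :=
  ⨅ π ∈ couplings ν μ, ∫⁻ p, ENNReal.ofReal (c p.1 p.2) ∂π

open Classical in
/-- Relative entropy `H(ν|μ)`. -/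
noncomputable def relEnt {X : Type*} [MeasurableSpace X] (ν μ : Measure X) : ℝ≥0∞ :=
  if ν ≪ μ ∧ Integrable (llr ν μ) ν then ENNReal.ofReal (∫ x, llr ν μ x ∂ν) else ∞


/-- Right derivative of a real function. -/
noncomputable def rderiv (φ : ℝ → ℝ) (x : ℝ) : ℝ := derivWithin φ (Set.Ioi x) x

lemma aux_rd {φ : ℝ → ℝ} (hconv : ConvexOn ℝ (Set.Ici 0) φ) {x : ℝ} (hx : 0 < x) :
    HasDerivWithinAt φ (rderiv φ x) (Set.Ioi x) x ∧ slope φ x 0 ≤ rderiv φ x := by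
  have hmem : x ∈ Set.Ici (0:ℝ) := hx.le
  have hsm := hconv.slope_mono hmem
  have h0 : (0:ℝ) ∈ Set.Ici (0:ℝ) \ {x} := ⟨Set.self_mem_Ici, by simp [hx.ne]⟩
  have hsub : Set.Ioi x ⊆ Set.Ici (0:ℝ) \ {x} := fun z hz =>
    ⟨le_of_lt (hx.trans hz), by simp [ne_of_gt (show x < z from hz)]⟩
  have hmono : MonotoneOn (slope φ x) (Set.Ioi x) := hsm.mono hsub
  have hbdd : BddBelow (slope φ x '' Set.Ioi x) := by
    refine ⟨slope φ x 0, ?_⟩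
    rintro _ ⟨z, hz, rfl⟩
    exact hsm h0 (hsub hz) (le_of_lt (hx.trans hz))
  have htend := hmono.tendsto_nhdsGT hbdd
  set L := sInf (slope φ x '' Set.Ioi x) with hL
  have hder : HasDerivWithinAt φ L (Set.Ioi x) x :=
    (hasDerivWithinAt_iff_tendsto_slope' notMem_Ioi_self).mpr htend
  have hrd : rderiv φ x = L := hder.derivWithin (uniqueDiffWithinAt_Ioi x)
  refine ⟨hrd ▸ hder, ?_⟩
  rw [hrd]
  refine le_csInf (Set.Nonempty.image _ ⟨x+1, by simp⟩) ?_
  rintro _ ⟨z, hz, rfl⟩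
  exact hsm h0 (hsub hz) (le_of_lt (hx.trans hz))

lemma aux_homog {φ : ℝ → ℝ} (hconv : ConvexOn ℝ (Set.Ici 0) φ)
    (hφpos : ∀ z > (0:ℝ), 0 < φ z) {p₀ : ℝ}
    (hub : ∀ z > (0:ℝ), rderiv φ z ≤ p₀ * φ z / z)
    {y x : ℝ} (hy : 0 < y) (hyx : y ≤ x) :
    φ x ≤ φ y * (x / y) ^ p₀ := by
  have hx : 0 < x := lt_of_lt_of_le hy hyx
  have hφy : 0 < φ y := hφpos y hy
  have hcont : ContinuousOn φ (Set.Ioi (0:ℝ)) := by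
    have := hconv.continuousOn_interior; rwa [interior_Ici] at this
  have key : ∀ ε > (0:ℝ),
      φ x ≤ φ y * Real.exp (p₀ * (Real.log x - Real.log y) + ε * (x - y)) := by
    intro ε hε
    set B : ℝ → ℝ := fun z => φ y * Real.exp (p₀ * (Real.log z - Real.log y) + ε * (z - y))
      with hB
    set B' : ℝ → ℝ := fun z => B z * (p₀ / z + ε) with hB'
    have hBz : ∀ z : ℝ, 0 < z → HasDerivAt B (B' z) z := by
      intro z hz
      have h1 : HasDerivAt (fun z => p₀ * (Real.log z - Real.log y) + ε * (z - y))
          (p₀ * z⁻¹ + ε) z := by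
        have hlog : HasDerivAt (fun z => Real.log z - Real.log y) z⁻¹ z :=
          (Real.hasDerivAt_log hz.ne').sub_const _
        have hlin : HasDerivAt (fun z : ℝ => ε * (z - y)) ε z := by
          simpa using ((hasDerivAt_id z).sub_const y).const_mul ε
        exact (hlog.const_mul p₀).add hlin
      have := (h1.exp).const_mul (φ y)
      convert this using 1
      · rfl
      · rfl
      simp only [hB', hB]
      field_simp
    have main : φ x ≤ B x := by
      refine image_le_of_deriv_right_lt_deriv_boundary'
        (f := φ) (f' := fun z => rderiv φ z) (B := B) (B' := B') (a := y) (b := x)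
        (hcont.mono ?_) ?_ ?_ ?_ ?_ ?_ (Set.right_mem_Icc.mpr hyx)
      · intro z hz; exact lt_of_lt_of_le hy hz.1
      · intro z hz
        have hz0 : 0 < z := lt_of_lt_of_le hy hz.1
        have := (aux_rd hconv hz0).1
        rw [← Set.Ioi_insert]
        exact HasFDerivWithinAt.insert this
      · simp [hB]
      · intro z hz
        exact ((hBz z (lt_of_lt_of_le hy hz.1)).continuousAt).continuousWithinAt
      · intro z hz
        exact (hBz z (lt_of_lt_of_le hy hz.1)).hasDerivWithinAt
      · intro z hz hcontact
        have hz0 : 0 < z := lt_of_lt_of_le hy hz.1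
        have hBpos : 0 < B z := hcontact ▸ hφpos z hz0
        have h2 : rderiv φ z ≤ p₀ * φ z / z := hub z hz0
        rw [hcontact] at h2
        calc rderiv φ z ≤ p₀ * B z / z := h2
          _ = B z * (p₀ / z) := by ring
          _ < B z * (p₀ / z + ε) := by
              have := mul_lt_mul_of_pos_left (lt_add_of_pos_right (p₀/z) hε) hBpos
              linarith [this]
    exact main
  -- take ε → 0
  have htendsto : Filter.Tendsto
      (fun ε : ℝ => φ y * Real.exp (p₀ * (Real.log x - Real.log y) + ε * (x - y)))
      (nhdsWithin 0 (Set.Ioi 0)) (nhds (φ y * Real.exp (p₀ * (Real.log x - Real.log y) + 0 * (x - y)))) := by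
    apply Filter.Tendsto.mono_left _ nhdsWithin_le_nhds
    exact (Continuous.tendsto (by fun_prop) 0)
  have hle : φ x ≤ φ y * Real.exp (p₀ * (Real.log x - Real.log y) + 0 * (x - y)) := by
    refine ge_of_tendsto htendsto ?_
    filter_upwards [self_mem_nhdsWithin] with ε hε using key ε hε
  have : (x / y) ^ p₀ = Real.exp (p₀ * (Real.log x - Real.log y)) := by
    rw [Real.rpow_def_of_pos (div_pos hx hy), Real.log_div hx.ne' hy.ne']
    ring_nf
  rw [this]
  simpa using hle

lemma aux_subadd {φ : ℝ → ℝ} (hconv : ConvexOn ℝ (Set.Ici 0) φ) (hφ0 : φ 0 = 0)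
    (hφpos : ∀ z > (0:ℝ), 0 < φ z) {p₀ : ℝ} (hp1 : 1 ≤ p₀)
    (hub : ∀ z > (0:ℝ), rderiv φ z ≤ p₀ * φ z / z)
    {s t : ℝ} (hs : 0 ≤ s) (ht : 0 ≤ t) :
    (φ (s + t)) ^ (1/p₀ : ℝ) ≤ (φ s) ^ (1/p₀ : ℝ) + (φ t) ^ (1/p₀ : ℝ) := by
  have hp0 : 0 < p₀ := lt_of_lt_of_le one_pos hp1
  have hφnn : ∀ z : ℝ, 0 ≤ z → 0 ≤ φ z := by
    intro z hz; rcases eq_or_lt_of_le hz with h | h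
    · simp [← h, hφ0]
    · exact (hφpos z h).le
  have hne : (1/p₀ : ℝ) ≠ 0 := by positivity
  rcases eq_or_lt_of_le hs with rfl | hs'
  · rw [zero_add, hφ0, Real.zero_rpow hne, zero_add]
  rcases eq_or_lt_of_le ht with rfl | ht'
  · rw [add_zero, hφ0, Real.zero_rpow hne, add_zero]
  -- both positive
  have key : ∀ u v : ℝ, 0 < u → 0 < v →
      (φ (u + v)) ^ (1/p₀ : ℝ) * u ≤ (φ u) ^ (1/p₀ : ℝ) * (u + v) := by
    intro u v hu hv
    have h1 : φ (u + v) ≤ φ u * ((u + v) / u) ^ p₀ :=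
      aux_homog hconv hφpos hub hu (by linarith)
    have h2 : (φ (u+v)) ^ (1/p₀:ℝ) ≤ (φ u * ((u + v) / u) ^ p₀) ^ (1/p₀:ℝ) :=
      Real.rpow_le_rpow (hφnn _ (by positivity)) h1 (by positivity)
    have h3 : (φ u * ((u + v) / u) ^ p₀) ^ (1/p₀:ℝ)
        = (φ u) ^ (1/p₀:ℝ) * ((u + v) / u) := by
      rw [Real.mul_rpow (hφnn _ hu.le) (by positivity),
        ← Real.rpow_mul (by positivity : (0:ℝ) ≤ (u+v)/u), mul_one_div,
        div_self hp0.ne', Real.rpow_one]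
    rw [h3] at h2
    calc (φ (u + v)) ^ (1/p₀:ℝ) * u ≤ ((φ u) ^ (1/p₀:ℝ) * ((u+v)/u)) * u :=
          mul_le_mul_of_nonneg_right h2 hu.le
      _ = (φ u) ^ (1/p₀:ℝ) * (u + v) := by field_simp
  have k1 := key s t hs' ht'
  have k2 := key t s ht' hs'
  rw [add_comm t s] at k2
  have hsum : (φ (s + t)) ^ (1/p₀:ℝ) * (s + t)
      ≤ ((φ s) ^ (1/p₀:ℝ) + (φ t) ^ (1/p₀:ℝ)) * (s + t) := by nlinarith [k1, k2]
  exact le_of_mul_le_mul_right hsum (by linarith)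

lemma aux_pow2 {a b p : ℝ} (ha : 0 ≤ a) (hb : 0 ≤ b) (hp : 1 ≤ p) :
    (a + b) ^ p ≤ 2 ^ (p - 1) * (a ^ p + b ^ p) := by
  lift a to NNReal using ha
  lift b to NNReal using hb
  have := NNReal.rpow_add_le_mul_rpow_add_rpow a b hp
  exact_mod_cast this



set_option maxHeartbeats 1000000 in
theorem stmt7 {X : Type*} [MetricSpace X] [TopologicalSpace.SeparableSpace X] [CompleteSpace X]
    [MeasurableSpace X] [BorelSpace X]
    (μ : Measure X) [IsProbabilityMeasure μ]
    (φ : ℝ → ℝ) (hconv : ConvexOn ℝ (Set.Ici 0) φ) (hφ0 : φ 0 = 0)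
    (hφpos : ∀ x > (0:ℝ), 0 < φ x)
    (hφ2 : ∃ K : ℝ, ∀ x > (0:ℝ), φ (2 * x) / φ x ≤ K)
    (c : X → X → ℝ) (hc : ∀ x y, c x y = φ (dist x y))
    (p₀ : ℝ) (hp₀ : IsLUB {p : ℝ | ∃ x > (0:ℝ), p = x * rderiv φ x / φ x} p₀)
    (a' r₀ : ℝ) (ha' : 0 < a') (hr₀ : 0 ≤ r₀)
    (hconc : ∀ A : Set X, MeasurableSet A → ENNReal.ofReal (1/2) ≤ μ A →
      ∀ r : ℝ, r₀ ≤ r →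
        1 - ENNReal.ofReal (Real.exp (-(r - r₀) ^ p₀ / a'))
          ≤ μ {x : X | ∃ y ∈ A, (c x y) ^ (1/p₀ : ℝ) ≤ r}) :
    (∀ x₀ : X, ∀ δ : ℝ, δ < 1 / a' →
      Integrable (fun y => Real.exp (δ * c x₀ y)) μ) ∧
    (∀ δ : ℝ, δ < 1 / (a' * 2 ^ (p₀ - 1)) →
      Integrable (fun p : X × X => Real.exp (δ * c p.1 p.2)) (μ.prod μ)) := by
  -- basic properties of φ
  have hφnn : ∀ z : ℝ, 0 ≤ z → 0 ≤ φ z := by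
    intro z hz; rcases eq_or_lt_of_le hz with h | h
    · simp [← h, hφ0]
    · exact (hφpos z h).le
  have hφmul : ∀ t x : ℝ, 0 ≤ t → t ≤ 1 → 0 ≤ x → φ (t * x) ≤ t * φ x := by
    intro t x ht ht1 hx
    have h := hconv.2 (Set.mem_Ici.mpr hx) (Set.mem_Ici.mpr (le_refl (0:ℝ)))
      ht (by linarith : (0:ℝ) ≤ 1 - t) (by ring)
    simpa [hφ0] using h
  have hφmono : ∀ u v : ℝ, 0 ≤ u → u ≤ v → φ u ≤ φ v := by
    intro u v hu huv
    rcases eq_or_lt_of_le (hu.trans huv) with h | hv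
    · have : u = 0 := le_antisymm (huv.trans h.symm.le) hu
      simp [this, ← h]
    · have h1 : φ ((u/v) * v) ≤ (u/v) * φ v := hφmul _ _ (by positivity)
        (by rw [div_le_one hv]; exact huv) hv.le
      rw [div_mul_cancel₀ _ hv.ne'] at h1
      calc φ u ≤ (u/v) * φ v := h1
        _ ≤ 1 * φ v := by
            apply mul_le_mul_of_nonneg_right _ (hφnn v hv.le)
            rw [div_le_one hv]; exact huv
        _ = φ v := one_mul _
  have hcontIoi : ContinuousOn φ (Set.Ioi (0:ℝ)) := by
    have := hconv.continuousOn_interior; rwa [interior_Ici] at this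
  have hφcont : ContinuousOn φ (Set.Ici (0:ℝ)) := by
    intro x hx
    rcases eq_or_lt_of_le (Set.mem_Ici.mp hx) with h | h
    · rw [ContinuousWithinAt, ← h, hφ0]
      apply squeeze_zero' (f := φ) (g := fun x => x * φ 1)
      · filter_upwards [self_mem_nhdsWithin] with z hz using hφnn z hz
      · filter_upwards [eventually_nhdsWithin_of_eventually_nhds
          (eventually_lt_nhds one_pos), self_mem_nhdsWithin] with z h1 h2
        simpa using hφmul z 1 h2 h1.le zero_le_one
      · have : Filter.Tendsto (fun x : ℝ => x * φ 1) (nhds 0) (nhds 0) := by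
          simpa using (continuous_mul_right (φ 1)).tendsto (0:ℝ)
        exact this.mono_left nhdsWithin_le_nhds
    · exact ((hcontIoi.continuousAt (Ioi_mem_nhds h)).continuousWithinAt)
  -- p₀ bounds
  have hub : ∀ z > (0:ℝ), rderiv φ z ≤ p₀ * φ z / z := by
    intro z hz
    have hmem : z * rderiv φ z / φ z ≤ p₀ := hp₀.1 ⟨z, hz, rfl⟩
    have hφz := hφpos z hz
    rw [div_le_iff₀ hφz] at hmem
    rw [le_div_iff₀ hz]
    linarith [hmem]
  have hp1 : 1 ≤ p₀ := by
    have hφ1 : 0 < φ 1 := hφpos 1 one_pos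
    have h := (aux_rd hconv one_pos).2
    have hsl : slope φ 1 0 = φ 1 := by
      simp [slope_def_field, hφ0]
    rw [hsl] at h
    have hmem : (1:ℝ) * rderiv φ 1 / φ 1 ≤ p₀ := hp₀.1 ⟨1, one_pos, rfl⟩
    have : (1:ℝ) ≤ 1 * rderiv φ 1 / φ 1 := by
      rw [one_mul, le_div_iff₀ hφ1]; linarith
    linarith
  have hp0 : 0 < p₀ := lt_of_lt_of_le one_pos hp1
  -- triangle inequality for c^(1/p₀)
  have hcnn : ∀ x y : X, 0 ≤ c x y := fun x y => (hc x y) ▸ hφnn _ dist_nonneg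
  have hcsymm : ∀ x y : X, c x y = c y x := by intro x y; rw [hc, hc, dist_comm]
  have tri : ∀ x y z : X,
      (c x z) ^ (1/p₀ : ℝ) ≤ (c x y) ^ (1/p₀ : ℝ) + (c y z) ^ (1/p₀ : ℝ) := by
    intro x y z
    have h1 : φ (dist x z) ≤ φ (dist x y + dist y z) :=
      hφmono _ _ dist_nonneg (dist_triangle x y z)
    have h2 : (φ (dist x z)) ^ (1/p₀ : ℝ) ≤ (φ (dist x y + dist y z)) ^ (1/p₀ : ℝ) :=
      Real.rpow_le_rpow (hφnn _ dist_nonneg) h1 (by positivity)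
    have h3 := aux_subadd hconv hφ0 hφpos hp1 hub (dist_nonneg (x := x) (y := y))
      (dist_nonneg (x := y) (y := z))
    rw [hc, hc, hc]
    exact h2.trans h3
  have ccont : ∀ x₀ : X, Continuous fun y => c x₀ y := by
    intro x₀
    have hd : Continuous fun y => dist x₀ y := continuous_const.dist continuous_id
    have := hφcont.comp_continuous hd (fun y => Set.mem_Ici.mpr dist_nonneg)
    simpa [hc, Function.comp_def] using this

  have part1 : ∀ x₀ : X, ∀ δ : ℝ, δ < 1 / a' →
      Integrable (fun y => Real.exp (δ * c x₀ y)) μ := by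
    intro x₀ δ hδ
    have hmeas : AEStronglyMeasurable (fun y => Real.exp (δ * c x₀ y)) μ :=
      (Real.continuous_exp.comp (continuous_const.mul (ccont x₀))).aestronglyMeasurable
    rcases le_or_gt δ 0 with hδ0 | hδ0
    · refine Integrable.mono' (integrable_const 1) hmeas (Filter.Eventually.of_forall ?_)
      intro y
      rw [Real.norm_eq_abs, abs_of_pos (Real.exp_pos _)]
      calc Real.exp (δ * c x₀ y) ≤ Real.exp 0 :=
            Real.exp_le_exp.mpr (mul_nonpos_of_nonpos_of_nonneg hδ0 (hcnn x₀ y))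
        _ = 1 := Real.exp_zero
    -- now 0 < δ
    set ρ : X → ℝ := fun y => (c x₀ y) ^ (1/p₀ : ℝ) with hρ
    have hρcont : Continuous ρ :=
      Continuous.rpow_const (ccont x₀) (fun y => Or.inr (by positivity))
    have hρnn : ∀ y, 0 ≤ ρ y := fun y => Real.rpow_nonneg (hcnn x₀ y) _
    have hρpow : ∀ y, ρ y ^ p₀ = c x₀ y := by
      intro y
      rw [hρ, ← Real.rpow_mul (hcnn x₀ y), one_div_mul_cancel hp0.ne', Real.rpow_one]
    -- choose the radius R
    have hU : (⋃ n : ℕ, ρ ⁻¹' (Set.Iic (n:ℝ))) = Set.univ := by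
      ext y
      simp only [Set.mem_iUnion, Set.mem_preimage, Set.mem_Iic, Set.mem_univ, iff_true]
      exact exists_nat_ge (ρ y)
    have hmono : Monotone (fun n : ℕ => ρ ⁻¹' (Set.Iic (n:ℝ))) := by
      intro m n hmn
      apply Set.preimage_mono
      exact Set.Iic_subset_Iic.mpr (by exact_mod_cast hmn)
    have htm := tendsto_measure_iUnion_atTop (μ := μ) hmono
    rw [hU] at htm
    have hev : ∀ᶠ n : ℕ in atTop, ENNReal.ofReal (1/2) ≤ μ (ρ ⁻¹' (Set.Iic (n:ℝ))) := by
      apply htm.eventually_const_le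
      rw [measure_univ]
      exact ENNReal.ofReal_lt_one.mpr (by norm_num)
    obtain ⟨N₀, hN₀⟩ := hev.exists
    set R : ℝ := (N₀ : ℝ) with hR
    have hRnn : 0 ≤ R := Nat.cast_nonneg _
    -- the tail estimate
    have tail : ∀ r : ℝ, r₀ ≤ r →
        μ (ρ ⁻¹' (Set.Iic (r + R)))ᶜ ≤ ENNReal.ofReal (Real.exp (-(r - r₀) ^ p₀ / a')) := by
      intro r hr
      have hE := hconc (ρ ⁻¹' (Set.Iic R)) (hρcont.measurable measurableSet_Iic) hN₀ r hr
      have hsub : {x : X | ∃ y ∈ ρ ⁻¹' (Set.Iic R), (c x y) ^ (1/p₀:ℝ) ≤ r}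
          ⊆ ρ ⁻¹' (Set.Iic (r + R)) := by
        rintro x ⟨y, hyA, hxy⟩
        have h1 : ρ x ≤ ρ y + (c y x) ^ (1/p₀:ℝ) := tri x₀ y x
        have h2 : (c y x) ^ (1/p₀:ℝ) ≤ r := by rw [hcsymm y x]; exact hxy
        have h3 : ρ y ≤ R := hyA
        simp only [Set.mem_preimage, Set.mem_Iic]
        linarith
      have hle : 1 - ENNReal.ofReal (Real.exp (-(r - r₀) ^ p₀ / a'))
          ≤ μ (ρ ⁻¹' (Set.Iic (r + R))) := hE.trans (measure_mono hsub)
      rw [prob_compl_eq_one_sub (hρcont.measurable measurableSet_Iic)]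
      rw [tsub_le_iff_right]
      rw [tsub_le_iff_right] at hle
      calc (1:ℝ≥0∞) ≤ μ (ρ ⁻¹' (Set.Iic (r + R))) + ENNReal.ofReal (Real.exp (-(r - r₀) ^ p₀ / a')) := hle
        _ = ENNReal.ofReal (Real.exp (-(r - r₀) ^ p₀ / a')) + μ (ρ ⁻¹' (Set.Iic (r + R))) := add_comm _ _
    -- partition into annuli
    refine ⟨hmeas, ?_⟩
    rw [hasFiniteIntegral_iff_ofReal (Filter.Eventually.of_forall fun y => (Real.exp_pos _).le)]
    set S : ℕ → Set X := fun n => ρ ⁻¹' (Set.Ico (n:ℝ) ((n:ℝ)+1)) with hS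
    have hSm : ∀ n, MeasurableSet (S n) := fun n => hρcont.measurable measurableSet_Ico
    have hfloor : ∀ y n, y ∈ S n → n = Nat.floor (ρ y) := by
      intro y n hy
      obtain ⟨h1, h2⟩ := hy
      exact (Nat.floor_eq_iff (hρnn y)).mpr ⟨h1, h2⟩ |>.symm
    have hSd : Pairwise (Function.onFun Disjoint S) := by
      intro m n hmn
      apply Set.disjoint_left.mpr
      intro y hym hyn
      exact hmn ((hfloor y m hym).trans (hfloor y n hyn).symm)
    have hUS : (⋃ n, S n) = Set.univ := by
      ext y
      simp only [Set.mem_iUnion, Set.mem_univ, iff_true]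
      exact ⟨Nat.floor (ρ y), Nat.floor_le (hρnn y), Nat.lt_floor_add_one (ρ y)⟩
    have hsplit : ∫⁻ y, ENNReal.ofReal (Real.exp (δ * c x₀ y)) ∂μ
        = ∑' n : ℕ, ∫⁻ y in S n, ENNReal.ofReal (Real.exp (δ * c x₀ y)) ∂μ := by
      rw [← setLIntegral_univ, ← hUS, lintegral_iUnion hSm hSd]
    have hpiece : ∀ n : ℕ, ∫⁻ y in S n, ENNReal.ofReal (Real.exp (δ * c x₀ y)) ∂μ
        ≤ ENNReal.ofReal (Real.exp (δ * ((n:ℝ)+1) ^ p₀)) * μ (S n) := by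
      intro n
      calc ∫⁻ y in S n, ENNReal.ofReal (Real.exp (δ * c x₀ y)) ∂μ
          ≤ ∫⁻ _ in S n, ENNReal.ofReal (Real.exp (δ * ((n:ℝ)+1) ^ p₀)) ∂μ := by
            apply setLIntegral_mono measurable_const
            intro y hy
            apply ENNReal.ofReal_le_ofReal
            apply Real.exp_le_exp.mpr
            apply mul_le_mul_of_nonneg_left _ hδ0.le
            rw [← hρpow y]
            exact Real.rpow_le_rpow (hρnn y) hy.2.le hp0.le
        _ = ENNReal.ofReal (Real.exp (δ * ((n:ℝ)+1) ^ p₀)) * μ (S n) := setLIntegral_const _ _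
    set b : ℝ := R + r₀ + 1 with hb
    have hbpos : 0 < b := by positivity
    have hSμ : ∀ n : ℕ, b ≤ (n:ℝ) →
        μ (S n) ≤ ENNReal.ofReal (Real.exp (-((n:ℝ) - b) ^ p₀ / a')) := by
      intro n hn
      have hr : r₀ ≤ (n:ℝ) - 1 - R := by rw [hb] at hn; linarith
      have ht := tail ((n:ℝ) - 1 - R) hr
      have heq : ((n:ℝ) - 1 - R) - r₀ = (n:ℝ) - b := by rw [hb]; ring
      rw [heq] at ht
      refine le_trans (measure_mono ?_) ht
      intro y hy
      simp only [Set.mem_compl_iff, Set.mem_preimage, Set.mem_Iic, not_le]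
      have h1 : ((n:ℝ)) ≤ ρ y := hy.1
      linarith
    -- choose parameters for the geometric bound
    have hδa : δ * a' < 1 := by
      calc δ * a' < (1/a') * a' := by
            apply mul_lt_mul_of_pos_right hδ ha'
        _ = 1 := by field_simp
    set η : ℝ := (1 + δ * a') / 2 with hη
    have hηgt : δ * a' < η := by rw [hη]; linarith
    have hηlt : η < 1 := by rw [hη]; linarith
    have hηpos : 0 < η := by
      have : 0 < δ * a' := mul_pos hδ0 ha'
      rw [hη]; linarith
    set K : ℝ := (η/(δ*a')) ^ (1/p₀ : ℝ) with hK
    have hbase : 1 < η/(δ*a') := (one_lt_div (mul_pos hδ0 ha')).mpr hηgt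
    have hKgt : 1 < K := by
      rw [hK]
      exact (Real.one_lt_rpow_iff_of_pos (by positivity)).mpr (Or.inl ⟨hbase, one_div_pos.mpr hp0⟩)
    have hKp : K ^ p₀ = η/(δ*a') := by
      rw [hK, ← Real.rpow_mul (le_of_lt (div_pos hηpos (mul_pos hδ0 ha'))), one_div_mul_cancel hp0.ne', Real.rpow_one]
    set c₁ : ℝ := (1-η)/(2*a') with hc₁
    have hc₁pos : 0 < c₁ := by rw [hc₁]; exact div_pos (by linarith) (by linarith)
    have claim : ∀ m : ℕ, 2*b ≤ (m:ℝ) → b+1 ≤ (m:ℝ) → (K*b+1)/(K-1) ≤ (m:ℝ) →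
        δ * ((m:ℝ)+1) ^ p₀ - ((m:ℝ) - b) ^ p₀ / a' ≤ -(c₁ * m) := by
      intro m h1 h2 h3
      have hm1 : (1:ℝ) ≤ (m:ℝ) - b := by linarith
      have hm2 : (m:ℝ)/2 ≤ (m:ℝ) - b := by linarith
      have hm3 : (m:ℝ) + 1 ≤ K * ((m:ℝ) - b) := by
        rw [div_le_iff₀ (by linarith : (0:ℝ) < K - 1)] at h3
        nlinarith
      have h4 : ((m:ℝ)+1) ^ p₀ ≤ (K * ((m:ℝ)-b)) ^ p₀ :=
        Real.rpow_le_rpow (by positivity) hm3 hp0.le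
      have h5 : (K * ((m:ℝ)-b)) ^ p₀ = K ^ p₀ * ((m:ℝ)-b) ^ p₀ :=
        Real.mul_rpow (by positivity) (by linarith)
      have h6 : (m:ℝ) - b ≤ ((m:ℝ)-b) ^ p₀ := by
        calc (m:ℝ) - b = ((m:ℝ)-b) ^ (1:ℝ) := (Real.rpow_one _).symm
          _ ≤ ((m:ℝ)-b) ^ p₀ := Real.rpow_le_rpow_of_exponent_le hm1 hp1
      have h7 : δ * ((m:ℝ)+1) ^ p₀ ≤ (η/a') * ((m:ℝ)-b) ^ p₀ := by
        calc δ * ((m:ℝ)+1) ^ p₀ ≤ δ * (K ^ p₀ * ((m:ℝ)-b) ^ p₀) := by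
              rw [← h5]; exact mul_le_mul_of_nonneg_left h4 hδ0.le
          _ = (η/a') * ((m:ℝ)-b) ^ p₀ := by
              rw [hKp]; field_simp
      have h8 : (η/a') * ((m:ℝ)-b) ^ p₀ - ((m:ℝ)-b) ^ p₀ / a'
          = -(((1-η)/a') * ((m:ℝ)-b) ^ p₀) := by field_simp; ring
      have h9 : ((1-η)/a') * ((m:ℝ)-b) ≤ ((1-η)/a') * ((m:ℝ)-b) ^ p₀ :=
        mul_le_mul_of_nonneg_left h6 (div_nonneg (by linarith) ha'.le)
      have h10 : c₁ * (m:ℝ) ≤ ((1-η)/a') * ((m:ℝ)-b) := by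
        rw [hc₁]
        calc (1-η)/(2*a') * (m:ℝ) = ((1-η)/a') * ((m:ℝ)/2) := by ring
          _ ≤ ((1-η)/a') * ((m:ℝ)-b) := mul_le_mul_of_nonneg_left hm2 (div_nonneg (by linarith) ha'.le)
      linarith
    obtain ⟨N, hN⟩ := exists_nat_ge (max (max (2*b) (b+1)) ((K*b+1)/(K-1)))
    set M : ℝ := max (max (2*b) (b+1)) ((K*b+1)/(K-1)) with hM
    set v : ℕ → ℝ := fun n => if (n:ℝ) < M then Real.exp (δ*((n:ℝ)+1)^p₀)
      else Real.exp (-(c₁*(n:ℝ))) with hv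
    have hvnn : ∀ n, 0 ≤ v n := by
      intro n
      by_cases h : ((n:ℝ) < M) <;> simp only [hv, if_pos, if_neg, h, if_true, if_false] <;>
        exact (Real.exp_pos _).le
    have hgv : ∀ n : ℕ, ENNReal.ofReal (Real.exp (δ * ((n:ℝ)+1) ^ p₀)) * μ (S n)
        ≤ ENNReal.ofReal (v n) := by
      intro n
      by_cases h : ((n:ℝ) < M)
      · simp only [hv, if_pos h]
        calc ENNReal.ofReal (Real.exp (δ * ((n:ℝ)+1) ^ p₀)) * μ (S n)
            ≤ ENNReal.ofReal (Real.exp (δ * ((n:ℝ)+1) ^ p₀)) * 1 :=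
              mul_le_mul_right prob_le_one _
          _ = ENNReal.ofReal (Real.exp (δ * ((n:ℝ)+1) ^ p₀)) := mul_one _
      · push_neg at h
        have hg1 : 2*b ≤ (n:ℝ) := le_trans (le_trans (le_max_left _ _) (le_max_left _ _)) h
        have hg2 : b+1 ≤ (n:ℝ) := le_trans (le_trans (le_max_right _ _) (le_max_left _ _)) h
        have hg3 : (K*b+1)/(K-1) ≤ (n:ℝ) := le_trans (le_max_right _ _) h
        have hbn : b ≤ (n:ℝ) := by linarith
        simp only [hv, if_neg (not_lt.mpr h)]
        calc ENNReal.ofReal (Real.exp (δ * ((n:ℝ)+1) ^ p₀)) * μ (S n)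
            ≤ ENNReal.ofReal (Real.exp (δ * ((n:ℝ)+1) ^ p₀)) *
              ENNReal.ofReal (Real.exp (-((n:ℝ) - b) ^ p₀ / a')) :=
              mul_le_mul_right (hSμ n hbn) _
          _ = ENNReal.ofReal (Real.exp (δ * ((n:ℝ)+1) ^ p₀ + (-((n:ℝ) - b) ^ p₀ / a'))) := by
              rw [← ENNReal.ofReal_mul (Real.exp_pos _).le, ← Real.exp_add]
          _ ≤ ENNReal.ofReal (Real.exp (-(c₁ * (n:ℝ)))) := by
              apply ENNReal.ofReal_le_ofReal
              apply Real.exp_le_exp.mpr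
              have hcl := claim n hg1 hg2 hg3
              rw [neg_div]
              linarith
    have hMN : M ≤ (N:ℝ) := hN
    have hle : ∀ i : ℕ, v (i + N) ≤ Real.exp (-c₁) ^ i := by
      intro i
      have hge : M ≤ ((i + N : ℕ):ℝ) := by
        refine hMN.trans ?_
        exact_mod_cast Nat.le_add_left N i
      simp only [hv, if_neg (not_lt.mpr hge)]
      rw [← Real.exp_nat_mul]
      apply Real.exp_le_exp.mpr
      push_cast
      nlinarith [hc₁pos.le, Nat.cast_nonneg (α := ℝ) i, Nat.cast_nonneg (α := ℝ) N]
    have htail : Summable (fun i : ℕ => v (i + N)) :=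
      Summable.of_nonneg_of_le (fun i => hvnn _) hle
        (summable_geometric_of_lt_one (Real.exp_pos _).le
          (Real.exp_lt_one_iff.mpr (by linarith)))
    have hsumv : Summable v := (summable_nat_add_iff N).mp htail
    rw [hsplit]
    calc ∑' n : ℕ, ∫⁻ y in S n, ENNReal.ofReal (Real.exp (δ * c x₀ y)) ∂μ
        ≤ ∑' n : ℕ, ENNReal.ofReal (v n) :=
          ENNReal.tsum_le_tsum (fun n => (hpiece n).trans (hgv n))
      _ = ENNReal.ofReal (∑' n, v n) := (ENNReal.ofReal_tsum_of_nonneg hvnn hsumv).symm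
      _ < ⊤ := ENNReal.ofReal_lt_top
  refine ⟨part1, ?_⟩
  intro δ hδ
  have h2pos : (0:ℝ) < 2 ^ (p₀ - 1) := Real.rpow_pos_of_pos two_pos _
  have hmeas2 : AEStronglyMeasurable (fun p : X × X => Real.exp (δ * c p.1 p.2)) (μ.prod μ) := by
    have hd : Continuous fun p : X × X => dist p.1 p.2 := continuous_dist
    have hcc : Continuous fun p : X × X => c p.1 p.2 := by
      have := hφcont.comp_continuous hd (fun p => Set.mem_Ici.mpr dist_nonneg)
      simpa [hc, Function.comp_def] using this
    exact (Real.continuous_exp.comp (continuous_const.mul hcc)).aestronglyMeasurable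
  rcases le_or_gt δ 0 with hδ0 | hδ0
  · refine Integrable.mono' (integrable_const 1) hmeas2 (Filter.Eventually.of_forall ?_)
    intro p
    rw [Real.norm_eq_abs, abs_of_pos (Real.exp_pos _)]
    calc Real.exp (δ * c p.1 p.2) ≤ Real.exp 0 :=
          Real.exp_le_exp.mpr (mul_nonpos_of_nonpos_of_nonneg hδ0 (hcnn _ _))
      _ = 1 := Real.exp_zero
  · have hne : Nonempty X := by
      by_contra h
      rw [not_nonempty_iff] at h
      have h1 : μ Set.univ = 1 := measure_univ
      rw [Set.univ_eq_empty_iff.mpr h] at h1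
      simp at h1
    obtain ⟨x₀⟩ := hne
    set δ' : ℝ := δ * 2 ^ (p₀ - 1) with hδ'
    have hδ'lt : δ' < 1 / a' := by
      rw [lt_div_iff₀ (by positivity : (0:ℝ) < a' * 2 ^ (p₀-1))] at hδ
      rw [hδ', lt_div_iff₀ ha']
      nlinarith [h2pos]
    have hf1 : Integrable (fun x => Real.exp (δ' * c x x₀)) μ := by
      have heq : (fun x => Real.exp (δ' * c x x₀)) = (fun x => Real.exp (δ' * c x₀ x)) :=
        funext fun x => by rw [hcsymm]
      rw [heq]
      exact part1 x₀ δ' hδ'lt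
    have hf2 : Integrable (fun y => Real.exp (δ' * c x₀ y)) μ := part1 x₀ δ' hδ'lt
    have hprod := hf1.mul_prod hf2
    refine Integrable.mono' hprod hmeas2 (Filter.Eventually.of_forall ?_)
    intro p
    rw [Real.norm_eq_abs, abs_of_pos (Real.exp_pos _), ← Real.exp_add]
    apply Real.exp_le_exp.mpr
    have htri := tri p.1 x₀ p.2
    have hA : (0:ℝ) ≤ (c p.1 x₀) ^ (1/p₀:ℝ) := Real.rpow_nonneg (hcnn _ _) _
    have hB : (0:ℝ) ≤ (c x₀ p.2) ^ (1/p₀:ℝ) := Real.rpow_nonneg (hcnn _ _) _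
    have hkey : c p.1 p.2 ≤ 2 ^ (p₀-1) * (c p.1 x₀ + c x₀ p.2) := by
      have h1 : c p.1 p.2 = ((c p.1 p.2) ^ (1/p₀:ℝ)) ^ p₀ := by
        rw [← Real.rpow_mul (hcnn _ _), one_div_mul_cancel hp0.ne', Real.rpow_one]
      have h2 : ((c p.1 p.2) ^ (1/p₀:ℝ)) ^ p₀
          ≤ ((c p.1 x₀) ^ (1/p₀:ℝ) + (c x₀ p.2) ^ (1/p₀:ℝ)) ^ p₀ :=
        Real.rpow_le_rpow (Real.rpow_nonneg (hcnn _ _) _) htri hp0.le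
      have h3 := aux_pow2 hA hB hp1
      have h4 : ((c p.1 x₀) ^ (1/p₀:ℝ)) ^ p₀ = c p.1 x₀ := by
        rw [← Real.rpow_mul (hcnn _ _), one_div_mul_cancel hp0.ne', Real.rpow_one]
      have h5 : ((c x₀ p.2) ^ (1/p₀:ℝ)) ^ p₀ = c x₀ p.2 := by
        rw [← Real.rpow_mul (hcnn _ _), one_div_mul_cancel hp0.ne', Real.rpow_one]
      rw [h4, h5] at h3
      calc c p.1 p.2 = _ := h1
        _ ≤ _ := h2
        _ ≤ _ := h3
    calc δ * c p.1 p.2 ≤ δ * (2 ^ (p₀-1) * (c p.1 x₀ + c x₀ p.2)) :=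
          mul_le_mul_of_nonneg_left hkey hδ0.le
      _ = δ' * c p.1 x₀ + δ' * c x₀ p.2 := by rw [hδ']; ring

end
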